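/- Let P be a finite poset of cardinality n, C = {C_1,...,C_l} a family of l pairwise disjoint chains, and A = {A_1,...,A_k} a family of k pairwise disjoint antichains. Then Σ|C_i| + Σ|A_j| ≤ n + kl, with equality if and only if C and A are orthogonal, i.e., the chains and antichains together cover P and every C_i meets every A_j. -/
import Mathlib


open Finset

/-- `cMax α k` is the maximal cardinality of a union of `k` pairwise disjoint chains
in the finite poset `α`. -/
noncomputable def cMax (α : Type*) [PartialOrder α] [Fintype α] [DecidableEq α] (k : ℕ) : ℕ :=
  sSup {n : ℕ | ∃ f : Fin k → Finset α,
    (∀ i, IsChain (· ≤ ·) (↑(f i) : Set α)) ∧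
    Pairwise (Function.onFun Disjoint f) ∧
    n = (Finset.univ.biUnion f).card}

/-- `aMax α k` is the maximal cardinality of a union of `k` pairwise disjoint antichains
in the finite poset `α`. -/
noncomputable def aMax (α : Type*) [PartialOrder α] [Fintype α] [DecidableEq α] (k : ℕ) : ℕ :=
  sSup {n : ℕ | ∃ f : Fin k → Finset α,
    (∀ i, IsAntichain (· ≤ ·) (↑(f i) : Set α)) ∧
    Pairwise (Function.onFun Disjoint f) ∧
    n = (Finset.univ.biUnion f).card}

/-- The `k`-th row length of the Greene shape `λ(α)`. -/
noncomputable def lam (α : Type*) [PartialOrder α] [Fintype α] [DecidableEq α] (k : ℕ) : ℕ :=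
  cMax α k - cMax α (k - 1)

/-- The `k`-th column length of the Greene shape, `μ_k = a_k - a_{k-1}`. -/
noncomputable def mu (α : Type*) [PartialOrder α] [Fintype α] [DecidableEq α] (k : ℕ) : ℕ :=
  aMax α k - aMax α (k - 1)

theorem orthogonality_inequality
    (α : Type*) [PartialOrder α] [Fintype α] [DecidableEq α]
    (l k : ℕ) (C : Fin l → Finset α) (A : Fin k → Finset α)
    (hC : ∀ i, IsChain (· ≤ ·) (↑(C i) : Set α))
    (hCd : Pairwise (Function.onFun Disjoint C))
    (hA : ∀ j, IsAntichain (· ≤ ·) (↑(A j) : Set α))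
    (hAd : Pairwise (Function.onFun Disjoint A)) :
    ((∑ i, (C i).card) + ∑ j, (A j).card ≤ Fintype.card α + k * l) ∧
    ((∑ i, (C i).card) + ∑ j, (A j).card = Fintype.card α + k * l ↔
      (Finset.univ.biUnion C ∪ Finset.univ.biUnion A = Finset.univ ∧
       ∀ i j, (C i ∩ A j).Nonempty)) := by
  classical
  set U := Finset.univ.biUnion C with hUdef
  set V := Finset.univ.biUnion A with hVdef
  have hU : ∑ i, (C i).card = U.card :=
    (Finset.card_biUnion (fun x _ y _ hxy => hCd hxy)).symm
  have hV : ∑ j, (A j).card = V.card :=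
    (Finset.card_biUnion (fun x _ y _ hxy => hAd hxy)).symm
  -- intersection decomposes
  have hinter : U ∩ V = (Finset.univ : Finset (Fin l × Fin k)).biUnion
      (fun p => C p.1 ∩ A p.2) := by
    ext a
    simp [hUdef, hVdef, Finset.mem_inter, Finset.mem_biUnion]
  have hdisj : ∀ x ∈ (Finset.univ : Finset (Fin l × Fin k)),
      ∀ y ∈ (Finset.univ : Finset (Fin l × Fin k)), x ≠ y →
      Disjoint (C x.1 ∩ A x.2) (C y.1 ∩ A y.2) := by
    rintro ⟨i1, j1⟩ - ⟨i2, j2⟩ - hxy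
    by_cases hi : i1 = i2
    · subst hi
      have hj : j1 ≠ j2 := fun h => hxy (by simp [h])
      exact (hAd hj).mono (Finset.inter_subset_right) (Finset.inter_subset_right)
    · exact (hCd hi).mono (Finset.inter_subset_left) (Finset.inter_subset_left)
  have hintercard : (U ∩ V).card = ∑ p : Fin l × Fin k, (C p.1 ∩ A p.2).card := by
    rw [hinter, Finset.card_biUnion hdisj]
  have hle1 : ∀ p : Fin l × Fin k, (C p.1 ∩ A p.2).card ≤ 1 := by
    rintro ⟨i, j⟩
    apply Finset.card_le_one.2
    intro a ha b hb
    have haC : a ∈ C i := (Finset.mem_inter.1 ha).1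
    have hbC : b ∈ C i := (Finset.mem_inter.1 hb).1
    have haA : a ∈ A j := (Finset.mem_inter.1 ha).2
    have hbA : b ∈ A j := (Finset.mem_inter.1 hb).2
    by_contra hab
    rcases hC i haC hbC hab with h | h
    · exact hA j haA hbA hab h
    · exact hA j hbA haA (Ne.symm hab) h
  have hsumle : ∑ p : Fin l × Fin k, (C p.1 ∩ A p.2).card ≤ k * l := by
    calc ∑ p : Fin l × Fin k, (C p.1 ∩ A p.2).card
        ≤ ∑ _p : Fin l × Fin k, 1 := Finset.sum_le_sum (fun p _ => hle1 p)
      _ = k * l := by simp [Nat.mul_comm]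
  have hunionle : (U ∪ V).card ≤ Fintype.card α := Finset.card_le_univ _
  have hkey : (∑ i, (C i).card) + ∑ j, (A j).card
      = (U ∪ V).card + ∑ p : Fin l × Fin k, (C p.1 ∩ A p.2).card := by
    rw [hU, hV, ← hintercard, Finset.card_union_add_card_inter]
  constructor
  · rw [hkey]; omega
  · rw [hkey]
    have h1 : (U ∪ V).card = Fintype.card α ↔ U ∪ V = Finset.univ :=
      Finset.card_eq_iff_eq_univ _
    have h2 : (∑ p : Fin l × Fin k, (C p.1 ∩ A p.2).card = k * l)
        ↔ ∀ i j, (C i ∩ A j).Nonempty := by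
      have : (∑ p : Fin l × Fin k, (C p.1 ∩ A p.2).card
          = ∑ _p : Fin l × Fin k, 1) ↔
          ∀ p ∈ (Finset.univ : Finset (Fin l × Fin k)), (C p.1 ∩ A p.2).card = 1 :=
        Finset.sum_eq_sum_iff_of_le (fun p _ => hle1 p)
      simp only [Finset.sum_const, Finset.card_univ, Fintype.card_prod,
        Fintype.card_fin, smul_eq_mul, mul_one, Nat.mul_comm l k] at this
      rw [this]
      constructor
      · intro h i j
        have hcard : (C i ∩ A j).card = 1 := h (i, j) (Finset.mem_univ _)
        exact Finset.card_pos.1 (by omega)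
      · rintro h ⟨i, j⟩ -
        show (C i ∩ A j).card = 1
        have h1 := Finset.card_pos.2 (h i j)
        have h2 := hle1 (i, j)
        simp only at h2
        omega
    constructor
    · intro h
      have hc1 : (U ∪ V).card = Fintype.card α := by
        have := hsumle; omega
      exact ⟨h1.1 hc1, h2.1 (by omega)⟩
    · rintro ⟨ha, hb⟩
      have h1' : (U ∪ V).card = Fintype.card α := by rw [ha]; exact Finset.card_univ
      rw [h1', h2.2 hb]
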